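/- Bounded ill-posedness from the DML identification condition (Proposition 6): Let d, k ∈ ℕ, let Θ ⊆ ℝ^d with θ₀ ∈ Θ, and for each θ ∈ Θ let F_θ be a square-integrable real random variable on (Ω, 𝓕, μ) (representing f_θ(X)). Assume: (i) pointwise Lipschitz parameterisation: there is L > 0 with |F_θ(ω) − F_{θ₀}(ω)| ≤ L·‖θ − θ₀‖ for all ω ∈ Ω and all θ ∈ Θ; (ii) there is a linear map J₀ : ℝ^d → ℝ^k and a constant c₀ > 0 with ‖J₀ v‖ ≥ c₀·‖v‖ for all v ∈ ℝ^d (smallest singular value of J₀ bounded below by c₀); (iii) identification: for every θ ∈ Θ, 2·∫ (μ[F_{θ₀} − F_θ | m])² dμ ≥ ‖J₀(θ − θ₀)‖. Then for every θ ∈ Θ with ‖θ − θ₀‖ ≤ 1, ∫ (F_{θ₀} − F_θ)² dμ ≤ (2L²/c₀)·∫ (μ[F_{θ₀} − F_θ | m])² dμ; equivalently, the ill-posedness ratio ‖F_{θ₀} − F_θ‖₂ / ‖μ[F_{θ₀} − F_θ | m]‖₂ is bounded by √2·L/√c₀. -/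

import Mathlib

open MeasureTheory

/-- Bounded ill-posedness from the DML identification condition
(Proposition 6): under a pointwise Lipschitz parameterisation, a lower
singular-value bound on `J₀`, and the identification condition
`2 ∫ (μ[F θ₀ - F θ | m])² dμ ≥ ‖J₀ (θ - θ₀)‖`, we get for every `θ ∈ Θ` with
`‖θ - θ₀‖ ≤ 1` that
`∫ (F θ₀ - F θ)² dμ ≤ (2 L² / c₀) ∫ (μ[F θ₀ - F θ | m])² dμ`. -/
theorem bounded_ill_posedness_of_dml_identification
    {Ω : Type*} {m 𝓕 : MeasurableSpace Ω} (hm : m ≤ 𝓕)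
    {μ : Measure Ω} [IsProbabilityMeasure μ]
    (d k : ℕ) (Θ : Set (EuclideanSpace ℝ (Fin d)))
    (θ₀ : EuclideanSpace ℝ (Fin d)) (hθ₀ : θ₀ ∈ Θ)
    (F : EuclideanSpace ℝ (Fin d) → Ω → ℝ) (hF : ∀ θ ∈ Θ, MemLp (F θ) 2 μ)
    (L : ℝ) (hL : 0 < L)
    (hLip : ∀ θ ∈ Θ, ∀ ω : Ω, |F θ ω - F θ₀ ω| ≤ L * ‖θ - θ₀‖)
    (J₀ : EuclideanSpace ℝ (Fin d) →ₗ[ℝ] EuclideanSpace ℝ (Fin k))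
    (c₀ : ℝ) (hc₀ : 0 < c₀) (hJ : ∀ v, c₀ * ‖v‖ ≤ ‖J₀ v‖)
    (hid : ∀ θ ∈ Θ,
      ‖J₀ (θ - θ₀)‖ ≤ 2 * ∫ ω, ((μ[fun ω' => F θ₀ ω' - F θ ω'|m]) ω) ^ 2 ∂μ) :
    ∀ θ ∈ Θ, ‖θ - θ₀‖ ≤ 1 →
      ∫ ω, (F θ₀ ω - F θ ω) ^ 2 ∂μ ≤
        (2 * L ^ 2 / c₀) *
          ∫ ω, ((μ[fun ω' => F θ₀ ω' - F θ ω'|m]) ω) ^ 2 ∂μ := by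
  intro θ hθ hθ1
  set I := ∫ ω, ((μ[fun ω' => F θ₀ ω' - F θ ω'|m]) ω) ^ 2 ∂μ with hI
  have hnorm : (0:ℝ) ≤ ‖θ - θ₀‖ := norm_nonneg _
  have hInt : Integrable (fun ω => (F θ₀ ω - F θ ω) ^ 2) μ :=
    ((hF θ₀ hθ₀).sub (hF θ hθ)).integrable_sq
  have h1 : ∫ ω, (F θ₀ ω - F θ ω) ^ 2 ∂μ ≤ L ^ 2 * ‖θ - θ₀‖ ^ 2 := by
    have hpt : ∀ ω, (F θ₀ ω - F θ ω) ^ 2 ≤ (L * ‖θ - θ₀‖) ^ 2 := by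
      intro ω
      have h := hLip θ hθ ω
      have : |F θ₀ ω - F θ ω| ≤ L * ‖θ - θ₀‖ := by
        rwa [abs_sub_comm]
      calc (F θ₀ ω - F θ ω) ^ 2 = |F θ₀ ω - F θ ω| ^ 2 := (sq_abs _).symm
        _ ≤ (L * ‖θ - θ₀‖) ^ 2 := by
          exact pow_le_pow_left₀ (abs_nonneg _) this 2
    calc ∫ ω, (F θ₀ ω - F θ ω) ^ 2 ∂μ
        ≤ ∫ _ω, (L * ‖θ - θ₀‖) ^ 2 ∂μ :=
          integral_mono hInt (integrable_const _) hpt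
      _ = (L * ‖θ - θ₀‖) ^ 2 := by simp
      _ = L ^ 2 * ‖θ - θ₀‖ ^ 2 := by ring
  have h2 : L ^ 2 * ‖θ - θ₀‖ ^ 2 ≤ L ^ 2 * ‖θ - θ₀‖ := by
    have : ‖θ - θ₀‖ ^ 2 ≤ ‖θ - θ₀‖ := by
      nlinarith
    nlinarith [sq_nonneg L]
  have h3 : c₀ * ‖θ - θ₀‖ ≤ 2 * I := le_trans (hJ _) (hid θ hθ)
  have h4 : ‖θ - θ₀‖ ≤ 2 * I / c₀ := by
    rw [le_div_iff₀ hc₀]; linarith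
  calc ∫ ω, (F θ₀ ω - F θ ω) ^ 2 ∂μ ≤ L ^ 2 * ‖θ - θ₀‖ := le_trans h1 h2
    _ ≤ L ^ 2 * (2 * I / c₀) := by
        exact mul_le_mul_of_nonneg_left h4 (sq_nonneg L)
    _ = (2 * L ^ 2 / c₀) * I := by ring
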